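/- arXiv:1907.11801 — 2 statements merged into one kernel-verified Lean document; each statement's English description precedes it below -/
import Mathlib

section
/- Let W be a finite Coxeter group, w ∈ W, s ∈ D_R(w). For every v ∈ W, deg_w(v) = deg_w(vs), where deg_w denotes degree in the Bruhat graph on the lower Bruhat interval [e, w] (with degree 0 for elements outside [e,w]). -/
open CoxeterSystem

variable {B W : Type*} [Group W] {M : CoxeterMatrix B}

/-- A directed edge of the Bruhat graph: `v = t * u` for a reflection `t`, with length increase. -/
def bruhatEdge (cs : CoxeterSystem M W) (u v : W) : Prop :=
  ∃ t : W, cs.IsReflection t ∧ v = t * u ∧ cs.length u < cs.length v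

/-- Bruhat order: reflexive-transitive closure of Bruhat edges. -/
def bruhatLE (cs : CoxeterSystem M W) : W → W → Prop :=
  Relation.ReflTransGen (bruhatEdge cs)

/-- The standard parabolic subgroup generated by the simple reflections indexed by `I`. -/
def parabolic (cs : CoxeterSystem M W) (I : Set B) : Subgroup W :=
  Subgroup.closure (cs.simple '' I)

/-- The parabolic double coset `W_I x W_J`. -/
def doubleCoset (cs : CoxeterSystem M W) (I J : Set B) (x : W) : Set W :=
  {w | ∃ u ∈ parabolic cs I, ∃ v ∈ parabolic cs J, w = u * x * v}

open scoped Classical in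
/-- Degree of `v` in the Bruhat graph on the lower interval `[e, w]` (0 outside). -/
noncomputable def degLower (cs : CoxeterSystem M W) (w v : W) : ℕ :=
  if bruhatLE cs v w then
    Set.ncard {y : W | bruhatLE cs y w ∧ (bruhatEdge cs v y ∨ bruhatEdge cs y v)}
  else 0


open List

namespace BruhatAux

open scoped Classical

variable (cs : CoxeterSystem M W)

local prefix:100 "s" => cs.simple
local prefix:100 "π" => cs.wordProd
local prefix:100 "ℓ" => cs.length
local prefix:100 "ris" => cs.rightInvSeq

/-- The underlying function of the Bourbaki permutation representation on
reflections times signs. -/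
noncomputable def reflPermFun (i : B) :
    ({t : W // cs.IsReflection t} × ZMod 2) → ({t : W // cs.IsReflection t} × ZMod 2) :=
  fun p => (⟨s i * p.1.1 * s i, by
      have := p.1.2.conj (s i)
      rwa [cs.inv_simple] at this⟩,
    p.2 + if p.1.1 = s i then 1 else 0)

lemma conj_eq_simple_iff (i : B) (t : W) : s i * t * s i = s i ↔ t = s i := by
  constructor
  · intro h
    have h' := congrArg (fun x => s i * x * s i) h
    calc t = (s i * s i) * t * (s i * s i) := by rw [cs.simple_mul_simple_self]; group
    _ = s i * (s i * t * s i) * s i := by group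
    _ = s i * s i * s i := h'
    _ = s i := by rw [cs.simple_mul_simple_self, one_mul]
  · rintro rfl
    rw [cs.simple_mul_simple_self, one_mul]

lemma reflPermFun_involutive (i : B) : Function.Involutive (reflPermFun cs i) := by
  rintro ⟨⟨t, ht⟩, z⟩
  simp only [reflPermFun]
  refine Prod.ext (Subtype.ext ?_) ?_
  · show s i * (s i * t * s i) * s i = t
    calc s i * (s i * t * s i) * s i = (s i * s i) * t * (s i * s i) := by group
    _ = t := by rw [cs.simple_mul_simple_self]; group
  · show z + (if t = s i then 1 else 0) + (if s i * t * s i = s i then 1 else 0) = z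
    rw [if_congr (conj_eq_simple_iff cs i t) rfl rfl, add_assoc]
    rcases em (t = s i) with h | h
    · rw [if_pos h]
      have : (1 : ZMod 2) + 1 = 0 := by decide
      rw [this, add_zero]
    · rw [if_neg h]
      rw [add_zero, add_zero]

/-- The Bourbaki permutation. -/
noncomputable def reflPerm (i : B) : Equiv.Perm ({t : W // cs.IsReflection t} × ZMod 2) :=
  (reflPermFun_involutive cs i).toPerm

lemma reflPerm_apply (i : B) (p) : reflPerm cs i p = reflPermFun cs i p := rfl

/-- Master formula: applying a word's worth of permutations. -/
lemma prodMap_reflPerm_apply (ω : List B) (t : W) (ht : cs.IsReflection t) (z : ZMod 2) :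
    ((ω.map (reflPerm cs)).prod) (⟨t, ht⟩, z) =
      (⟨π ω * t * (π ω)⁻¹, by simpa using ht.conj (π ω)⟩,
        z + ((ris ω).count t : ZMod 2)) := by
  induction ω generalizing z with
  | nil =>
    simp only [map_nil, prod_nil, Equiv.Perm.one_apply, rightInvSeq_nil, count_nil,
      Nat.cast_zero, add_zero]
    refine Prod.ext (Subtype.ext ?_) rfl
    simp
  | cons j ω ih =>
    simp only [map_cons, prod_cons, Equiv.Perm.mul_apply, ih]
    rw [reflPerm_apply]
    simp only [reflPermFun]
    refine Prod.ext (Subtype.ext ?_) ?_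
    · show s j * (π ω * t * (π ω)⁻¹) * s j = π (j :: ω) * t * (π (j :: ω))⁻¹
      rw [cs.wordProd_cons, mul_inv_rev, cs.inv_simple]
      group
    · show z + ((ris ω).count t : ZMod 2) + (if π ω * t * (π ω)⁻¹ = s j then 1 else 0)
        = z + ((ris (j :: ω)).count t : ZMod 2)
      have hris : ris (j :: ω) = ((π ω)⁻¹ * s j * π ω) :: ris ω := rfl
      have hiff : ((π ω)⁻¹ * s j * π ω = t) ↔ (π ω * t * (π ω)⁻¹ = s j) := by
        constructor
        · intro h; rw [← h]; group
        · intro h; rw [← h]; group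
      simp only [hris, count_cons, beq_iff_eq]
      rw [if_congr hiff rfl rfl]
      push_cast [apply_ite (fun (n : ℕ) => (n : ZMod 2))]
      ring

lemma drop_alternatingWord (i i' : B) (n k : ℕ) :
    (alternatingWord i i' n).drop k = alternatingWord i i' (n - k) := by
  induction n generalizing k with
  | zero =>
    show ([] : List B).drop k = alternatingWord i i' (0 - k)
    simp [alternatingWord]
  | succ n ih =>
    cases k with
    | zero => simp
    | succ k =>
      rw [alternatingWord_succ' i i' n, List.drop_succ_cons, ih k]
      congr 1
      omega

lemma wordProd_alternatingWord_succ_aux (i i' : B) (n : ℕ) :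
    (π (alternatingWord i i' n))⁻¹ * π (alternatingWord i i' (n + 1)) =
      ((s i * s i') ^ (n / 2))⁻¹ * s i' * (s i * s i') ^ ((n + 1) / 2) := by
  rw [cs.prod_alternatingWord_eq_mul_pow, cs.prod_alternatingWord_eq_mul_pow]
  rcases Nat.even_or_odd n with h | h
  · have h1 : ¬ Even (n + 1) := by simp [Nat.even_add_one, h]
    have h2 : (n + 1) / 2 = n / 2 := by obtain ⟨c, hc⟩ := h; omega
    rw [if_pos h, if_neg h1, h2]
    group
  · have h0 : ¬ Even n := Nat.not_even_iff_odd.2 h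
    have h1 : Even (n + 1) := by simpa [Nat.even_add_one] using h0
    have h2 : (n + 1) / 2 = n / 2 + 1 := by obtain ⟨c, hc⟩ := h; omega
    rw [if_neg h0, if_pos h1, h2, one_mul, mul_inv_rev, cs.inv_simple]

lemma alt_qq_periodic (i i' : B) (k : ℕ) :
    (π (alternatingWord i i' (k + M i i')))⁻¹ * π (alternatingWord i i' (k + M i i' + 1)) =
      (π (alternatingWord i i' k))⁻¹ * π (alternatingWord i i' (k + 1)) := by
  rw [wordProd_alternatingWord_succ_aux, wordProd_alternatingWord_succ_aux]
  set m := M i i' with hm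
  set a := s i * s i' with ha
  have ham : a ^ m = 1 := cs.simple_mul_simple_pow i i'
  have hbb : s i' * s i' = 1 := cs.simple_mul_simple_self i'
  have hbab : ∀ d : ℕ, s i' * a ^ d * s i' = (a ^ d)⁻¹ := by
    intro d
    induction d with
    | zero => simpa using hbb
    | succ d ih =>
      have e1 : s i' * a ^ (d + 1) * s i' = (s i' * a ^ d * s i') * (s i' * a * s i') := by
        rw [pow_succ]
        have : (s i' * a ^ d * s i') * (s i' * a * s i')
            = s i' * a ^ d * (s i' * s i') * a * s i' := by group
        rw [this, hbb]
        group
      have e2 : s i' * a * s i' = a⁻¹ := by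
        rw [ha]
        have : s i' * (s i * s i') * s i' = (s i' * s i) * (s i' * s i') := by group
        rw [this, hbb, mul_one, mul_inv_rev, cs.inv_simple, cs.inv_simple]
      rw [e1, ih, e2, ← mul_inv_rev, ← pow_succ']
  obtain ⟨d1, hd1⟩ : ∃ d1, (k + m + 1) / 2 = (k + 1) / 2 + d1 :=
    ⟨(k + m + 1) / 2 - (k + 1) / 2, by omega⟩
  obtain ⟨d2, hd2⟩ : ∃ d2, (k + m) / 2 = k / 2 + d2 := ⟨(k + m) / 2 - k / 2, by omega⟩
  have hdsum : d1 + d2 = m := by omega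
  have hinv : (a ^ d1)⁻¹ = a ^ d2 := by
    apply inv_eq_of_mul_eq_one_right
    rw [← pow_add, hdsum, ham]
  have hswap : s i' * a ^ d1 = a ^ d2 * s i' := by
    calc s i' * a ^ d1 = (s i' * a ^ d1 * s i') * s i' := by rw [mul_assoc, hbb, mul_one]
    _ = a ^ d2 * s i' := by rw [hbab, hinv]
  rw [hd1, hd2, pow_add, pow_add]
  have hc : a ^ ((k + 1) / 2) * a ^ d1 = a ^ d1 * a ^ ((k + 1) / 2) := by
    rw [← pow_add, ← pow_add, add_comm]
  rw [hc]
  have : (a ^ (k / 2) * a ^ d2)⁻¹ * s i' * (a ^ d1 * a ^ ((k + 1) / 2))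
      = (a ^ (k / 2))⁻¹ * ((a ^ d2)⁻¹ * (s i' * a ^ d1)) * a ^ ((k + 1) / 2) := by group
  rw [this, hswap]
  group

lemma simple_getD_mul_wordProd_drop (ω : List B) (j : ℕ) (hj : j < ω.length) :
    (Option.map cs.simple ω[j]?).getD 1 * π (ω.drop (j + 1)) = π (ω.drop j) := by
  have hcons : ω.drop j = ω[j] :: ω.drop (j + 1) := List.drop_eq_getElem_cons hj
  rw [hcons, cs.wordProd_cons, List.getElem?_eq_getElem hj]
  rfl

lemma count_rightInvSeq_alternatingWord_even (i i' : B) (t : W) :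
    Even ((ris (alternatingWord i i' (2 * M i i'))).count t) := by
  set m := M i i' with hm
  set l := ris (alternatingWord i i' (2 * m)) with hl
  have hlen : l.length = 2 * m := by
    rw [hl, cs.length_rightInvSeq, length_alternatingWord]
  have entry : ∀ j, j < 2 * m → l.getD j 1 =
      (π (alternatingWord i i' (2 * m - j - 1)))⁻¹ * π (alternatingWord i i' (2 * m - j)) := by
    intro j hj
    rw [hl, cs.getD_rightInvSeq, mul_assoc,
      simple_getD_mul_wordProd_drop cs _ j (by rwa [length_alternatingWord]),
      drop_alternatingWord, drop_alternatingWord]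
    congr 3
  have hper : ∀ j, j < m → l.getD (j + m) 1 = l.getD j 1 := by
    intro j hj
    rw [entry j (by omega), entry (j + m) (by omega)]
    have e1 : 2 * m - j - 1 = (m - j - 1) + m := by omega
    have e2 : 2 * m - j = (m - j - 1) + m + 1 := by omega
    have e3 : 2 * m - (j + m) - 1 = m - j - 1 := by omega
    have e4 : 2 * m - (j + m) = (m - j - 1) + 1 := by omega
    rw [e1, e2, e3, e4, alt_qq_periodic]
  have htd : l.drop m = l.take m := by
    apply List.ext_getElem
    · rw [List.length_drop, List.length_take, hlen]; omega
    · intro j h1 h2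
      have hj : j < m := by
        rw [List.length_take, hlen] at h2; omega
      rw [List.getElem_drop, List.getElem_take]
      rw [← List.getD_eq_getElem l 1 (by omega), ← List.getD_eq_getElem l 1 (by omega)]
      rw [show m + j = j + m by omega]
      exact hper j hj
  have hsplit : l = l.take m ++ l.drop m := (List.take_append_drop m l).symm
  rw [hsplit, List.count_append, htd]
  exact ⟨(l.take m).count t, rfl⟩

lemma isLiftable_reflPerm : M.IsLiftable (reflPerm cs) := by
  intro i i'
  have key : ∀ m : ℕ, ((alternatingWord i i' (2 * m)).map (reflPerm cs)).prod
      = (reflPerm cs i * reflPerm cs i') ^ m := by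
    intro m
    induction m with
    | zero => simp [alternatingWord]
    | succ m ih =>
      have he : Even (2 * m) := ⟨m, by ring⟩
      have ho : ¬ Even (2 * m + 1) := by simp [Nat.even_add_one, he]
      have h1 : 2 * (m + 1) = (2 * m + 1) + 1 := by ring
      rw [h1, alternatingWord_succ' i i' (2 * m + 1), alternatingWord_succ' i i' (2 * m),
        if_neg ho, if_pos he, map_cons, map_cons, prod_cons, prod_cons, ih, pow_succ']
      rw [mul_assoc]
  apply Equiv.ext
  rintro ⟨⟨t, ht⟩, z⟩
  rw [← key, prodMap_reflPerm_apply]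
  have hπ : π (alternatingWord i i' (2 * M i i')) = 1 := by
    rw [cs.prod_alternatingWord_eq_mul_pow, if_pos ⟨M i i', by ring⟩,
      show 2 * M i i' / 2 = M i i' by omega, one_mul, cs.simple_mul_simple_pow]
  have hcount : (((ris (alternatingWord i i' (2 * M i i'))).count t : ℕ) : ZMod 2) = 0 := by
    obtain ⟨r, hr⟩ := count_rightInvSeq_alternatingWord_even cs i i' t
    rw [hr]
    push_cast
    rw [← two_mul, show (2 : ZMod 2) = 0 by decide, zero_mul]
  rw [hcount, add_zero]
  refine Prod.ext (Subtype.ext ?_) rfl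
  show π (alternatingWord i i' (2 * M i i')) * t * (π (alternatingWord i i' (2 * M i i')))⁻¹ = t
  rw [hπ]
  group

/-- The sign representation homomorphism. -/
noncomputable def rho : W →* Equiv.Perm ({t : W // cs.IsReflection t} × ZMod 2) :=
  cs.lift ⟨reflPerm cs, isLiftable_reflPerm cs⟩

lemma rho_simple (i : B) : rho cs (s i) = reflPerm cs i :=
  cs.lift_apply_simple (isLiftable_reflPerm cs) i

lemma rho_wordProd (ω : List B) : rho cs (π ω) = ((ω.map (reflPerm cs)).prod) := by
  rw [wordProd, map_list_prod (rho cs), List.map_map]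
  congr 1
  apply List.map_congr_left
  intro j _
  exact rho_simple cs j

/-- The sign cocycle. -/
noncomputable def eta (w : W) (T : {t : W // cs.IsReflection t}) : ZMod 2 :=
  ((rho cs w) (T, 0)).2

lemma eta_congr (x : W) (T T' : {t : W // cs.IsReflection t}) (h : T.1 = T'.1) :
    eta cs x T = eta cs x T' := by
  congr 1
  exact Subtype.ext h

lemma eta_wordProd (ω : List B) (t : W) (ht : cs.IsReflection t) :
    eta cs (π ω) ⟨t, ht⟩ = ((ris ω).count t : ZMod 2) := by
  rw [eta, rho_wordProd, prodMap_reflPerm_apply]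
  exact zero_add _

lemma rho_apply (w : W) (T : {t : W // cs.IsReflection t}) (z : ZMod 2) :
    rho cs w (T, z) = (⟨w * T.1 * w⁻¹, T.2.conj w⟩, z + eta cs w T) := by
  obtain ⟨ω, hω⟩ := cs.wordProd_surjective w
  obtain ⟨t, ht⟩ := T
  subst hω
  rw [rho_wordProd, prodMap_reflPerm_apply, eta_wordProd]

lemma eta_one (T : {t : W // cs.IsReflection t}) : eta cs 1 T = 0 := by
  rw [eta, map_one]
  rfl

lemma eta_mul (x y : W) (T : {t : W // cs.IsReflection t}) :
    eta cs (x * y) T = eta cs y T + eta cs x ⟨y * T.1 * y⁻¹, T.2.conj y⟩ := by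
  have h3 : rho cs (x * y) (T, 0) = rho cs x (rho cs y (T, 0)) := by rw [map_mul]; rfl
  rw [rho_apply cs y, rho_apply cs x, rho_apply cs (x * y)] at h3
  have h4 := congrArg Prod.snd h3
  simp only [zero_add] at h4
  exact h4

lemma eta_simple_self (i : B) : eta cs (s i) ⟨s i, cs.isReflection_simple i⟩ = 1 := by
  have h := eta_wordProd cs [i] (s i) (cs.isReflection_simple i)
  rw [cs.wordProd_singleton] at h
  rw [h, cs.rightInvSeq_singleton]
  simp

lemma eta_refl_self (T : {t : W // cs.IsReflection t}) : eta cs T.1 T = 1 := by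
  obtain ⟨t, ht⟩ := T
  obtain ⟨u, i, rfl⟩ := ht
  simp only []
  have hsi := cs.isReflection_simple i
  have hconj : cs.IsReflection (u * s i * u⁻¹) := hsi.conj u
  have h1 : eta cs (u * s i * u⁻¹) ⟨u * s i * u⁻¹, hconj⟩
      = eta cs u⁻¹ ⟨u * s i * u⁻¹, hconj⟩ + eta cs (u * s i) ⟨s i, hsi⟩ := by
    rw [eta_mul cs (u * s i) u⁻¹ ⟨u * s i * u⁻¹, hconj⟩]
    congr 1
    apply eta_congr
    show u⁻¹ * (u * s i * u⁻¹) * u⁻¹⁻¹ = s i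
    group
  have h2 : eta cs (u * s i) ⟨s i, hsi⟩ = 1 + eta cs u ⟨s i, hsi⟩ := by
    rw [eta_mul cs u (s i) ⟨s i, hsi⟩]
    congr 1
    · exact eta_simple_self cs i
    · apply eta_congr
      show s i * s i * (s i)⁻¹ = s i
      group
  have h3 : eta cs u⁻¹ ⟨u * s i * u⁻¹, hconj⟩ + eta cs u ⟨s i, hsi⟩ = 0 := by
    have h4 := eta_mul cs u u⁻¹ ⟨u * s i * u⁻¹, hconj⟩
    rw [mul_inv_cancel, eta_one] at h4
    rw [eta_congr cs u _ ⟨s i, hsi⟩ (by show u⁻¹ * (u * s i * u⁻¹) * u⁻¹⁻¹ = s i; group)] at h4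
    exact h4.symm
  rw [h1, h2]
  calc eta cs u⁻¹ ⟨u * s i * u⁻¹, hconj⟩ + (1 + eta cs u ⟨s i, hsi⟩)
      = (eta cs u⁻¹ ⟨u * s i * u⁻¹, hconj⟩ + eta cs u ⟨s i, hsi⟩) + 1 := by ring
  _ = 1 := by rw [h3, zero_add]

lemma mem_rightInvSeq_of_isRightInversion {ω : List B} (hω : cs.IsReduced ω) {t : W}
    (ht : cs.IsRightInversion (π ω) t) : t ∈ ris ω := by
  by_contra hmem
  have hcount : (ris ω).count t = 0 := List.count_eq_zero.2 hmem
  have h0 : eta cs (π ω) ⟨t, ht.1⟩ = 0 := by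
    rw [eta_wordProd cs ω t ht.1, hcount, Nat.cast_zero]
  have h1 : eta cs (π ω * t) ⟨t, ht.1⟩ = 1 := by
    rw [eta_mul cs (π ω) t ⟨t, ht.1⟩]
    have e1 : eta cs t ⟨t, ht.1⟩ = 1 := eta_refl_self cs ⟨t, ht.1⟩
    have e2 : eta cs (π ω) ⟨t * t * t⁻¹, (ht.1).conj t⟩ = 0 := by
      rw [eta_congr cs _ _ ⟨t, ht.1⟩ (by show t * t * t⁻¹ = t; group)]
      exact h0
    rw [e1, e2, add_zero]
  obtain ⟨ψ, hψred, hψ⟩ := cs.exists_reduced_word' (π ω * t)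
  have h1' : ((ris ψ).count t : ZMod 2) = 1 := by
    rw [← eta_wordProd cs ψ t ht.1, ← hψ]
    exact h1
  have hmem' : t ∈ ris ψ := by
    by_contra hc
    rw [List.count_eq_zero.2 hc, Nat.cast_zero] at h1'
    exact absurd h1'.symm one_ne_zero
  have hinv' := cs.isRightInversion_of_mem_rightInvSeq hψred hmem'
  rw [← hψ] at hinv'
  have h5 := hinv'.2
  rw [mul_assoc, ht.1.mul_self, mul_one] at h5
  have h6 := ht.2
  omega

lemma mem_leftInvSeq_of_isLeftInversion {ω : List B} (hω : cs.IsReduced ω) {t : W}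
    (ht : cs.IsLeftInversion (π ω) t) : t ∈ cs.leftInvSeq ω := by
  have hrev : cs.IsReduced ω.reverse := (cs.isReduced_reverse_iff ω).mpr hω
  have hinv : cs.IsRightInversion (π ω.reverse) t := by
    rw [cs.wordProd_reverse]
    exact cs.isRightInversion_inv_iff.mpr ht
  have hm := mem_rightInvSeq_of_isRightInversion cs hrev hinv
  rw [cs.rightInvSeq_reverse] at hm
  exact (List.mem_reverse).1 hm

lemma strong_exchange_left {ω : List B} (hω : cs.IsReduced ω) {t : W}
    (ht : cs.IsReflection t) (hlt : ℓ (t * π ω) < ℓ (π ω)) :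
    ∃ j < ω.length, t * π ω = π (ω.eraseIdx j) := by
  have hmem := mem_leftInvSeq_of_isLeftInversion cs hω ⟨ht, hlt⟩
  obtain ⟨j, hj, hjt⟩ := List.getElem_of_mem hmem
  refine ⟨j, by simpa using hj, ?_⟩
  rw [← hjt, ← List.getD_eq_getElem _ 1 hj, cs.getD_leftInvSeq_mul_wordProd]

/-! ### Bruhat order lemmas -/

lemma edge_simple_mul {u : W} (c : B) (h : ℓ u < ℓ (s c * u)) :
    bruhatEdge cs u (s c * u) :=
  ⟨s c, cs.isReflection_simple c, rfl, h⟩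

lemma edge_simple_cancel {u : W} (c : B) (h : ℓ (s c * u) < ℓ u) :
    bruhatEdge cs (s c * u) u :=
  ⟨s c, cs.isReflection_simple c, by rw [← mul_assoc, cs.simple_mul_simple_self, one_mul], h⟩

lemma edge_conj_simple {a : W} (c : B) {t : W} (ht : cs.IsReflection t)
    (h : ℓ (s c * a) < ℓ (s c * (t * a))) :
    bruhatEdge cs (s c * a) (s c * (t * a)) :=
  ⟨s c * t * (s c)⁻¹, ht.conj (s c), by group, h⟩

lemma length_conj_simple_ne (a : W) (c : B) {t : W} (ht : cs.IsReflection t) :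
    ℓ (s c * (t * a)) ≠ ℓ (s c * a) := by
  have h := (ht.conj (s c)).length_mul_right_ne (s c * a)
  have he : s c * t * (s c)⁻¹ * (s c * a) = s c * (t * a) := by group
  rwa [he] at h

/-- The diamond lemma: forced equality. -/
lemma diamond (c : B) {t u : W} (ht : cs.IsReflection t)
    (hlen : ℓ (t * u) = ℓ u + 1)
    (hsu : ℓ u < ℓ (s c * u)) (hsv : ℓ (s c * (t * u)) < ℓ (t * u)) :
    s c * u = t * u := by
  obtain ⟨ρ, hρred, hρ⟩ := cs.exists_reduced_word' (s c * (t * u))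
  have hlsv : ℓ (s c * (t * u)) + 1 = ℓ (t * u) := by
    rcases cs.length_simple_mul (t * u) c with h | h <;> omega
  have hπcons : π (c :: ρ) = t * u := by
    rw [cs.wordProd_cons, ← hρ, ← mul_assoc, cs.simple_mul_simple_self, one_mul]
  have hρlen : ρ.length = ℓ (s c * (t * u)) := by rw [← hρred, ← hρ]
  have hredcons : cs.IsReduced (c :: ρ) := by
    show ℓ (π (c :: ρ)) = (c :: ρ).length
    rw [hπcons, List.length_cons]
    omega
  have htv : ℓ (t * π (c :: ρ)) < ℓ (π (c :: ρ)) := by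
    rw [hπcons, ← mul_assoc, ht.mul_self, one_mul]
    omega
  obtain ⟨j, hj, hex⟩ := strong_exchange_left cs hredcons ht htv
  have htvu : t * π (c :: ρ) = u := by
    rw [hπcons, ← mul_assoc, ht.mul_self, one_mul]
  cases j with
  | zero =>
    rw [htvu, List.eraseIdx_cons_zero, ← hρ] at hex
    have h1 : s c * u = s c * (s c * (t * u)) := by rw [← hex]
    rw [h1, ← mul_assoc, cs.simple_mul_simple_self, one_mul]
  | succ k =>
    exfalso
    rw [htvu, List.eraseIdx_cons_succ, cs.wordProd_cons] at hex
    have h1 : s c * u = π (ρ.eraseIdx k) := by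
      rw [hex, ← mul_assoc, cs.simple_mul_simple_self, one_mul]
    have h2 : ℓ (s c * u) ≤ (ρ.eraseIdx k).length := by
      rw [h1]; exact cs.length_wordProd_le _
    have hk : k < ρ.length := by
      simp only [List.length_cons] at hj; omega
    have h3 := List.length_eraseIdx_add_one hk
    omega

/-- Lifting: multiplying by a left descent of `w` stays below `w`. -/
lemma lift_down (c : B) {w : W} (hw : ℓ (s c * w) < ℓ w) :
    ∀ {u : W}, bruhatLE cs u w → ℓ u < ℓ (s c * u) → bruhatLE cs (s c * u) w := by
  intro u hle
  induction hle using Relation.ReflTransGen.head_induction_on with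
  | refl =>
    intro hu
    exact absurd hu (by omega)
  | @head a v h' hcb ih =>
    intro hu
    obtain ⟨t, ht, rfl, hlen⟩ := h'
    have hne := length_conj_simple_ne cs a c ht
    rcases Nat.lt_trichotomy (ℓ (s c * a)) (ℓ (s c * (t * a))) with hcomp | hcomp | hcomp
    · have e1 := edge_conj_simple cs c ht hcomp
      rcases Nat.lt_or_ge (ℓ (t * a)) (ℓ (s c * (t * a))) with hv | hv
      · exact Relation.ReflTransGen.head e1 (ih hv)
      · have hv' : ℓ (s c * (t * a)) < ℓ (t * a) := by
          have := cs.length_simple_mul_ne (t * a) c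
          omega
        exact Relation.ReflTransGen.head e1
          (Relation.ReflTransGen.head (edge_simple_cancel cs c hv') hcb)
    · omega
    · have e1 : ℓ (s c * a) ≤ ℓ a + 1 := by
        rcases cs.length_simple_mul a c with h | h <;> omega
      have e2 : ℓ (t * a) ≤ ℓ (s c * (t * a)) + 1 := by
        rcases cs.length_simple_mul (t * a) c with h | h <;> omega
      have hlen1 : ℓ (t * a) = ℓ a + 1 := by omega
      have hsv : ℓ (s c * (t * a)) < ℓ (t * a) := by omega
      have hd := diamond cs c ht hlen1 hu hsv
      rw [hd]
      exact hcb

lemma bruhatLE_simple_mul_left (c : B) {w : W} (hw : ℓ (s c * w) < ℓ w) {u : W}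
    (h : bruhatLE cs u w) : bruhatLE cs (s c * u) w := by
  rcases Nat.lt_or_ge (ℓ u) (ℓ (s c * u)) with h1 | h1
  · exact lift_down cs c hw h h1
  · have hne := cs.length_simple_mul_ne u c
    exact Relation.ReflTransGen.head (edge_simple_cancel cs c (by omega)) h

lemma bruhatLE_simple_mul_left_iff (c : B) {w : W} (hw : ℓ (s c * w) < ℓ w) (u : W) :
    bruhatLE cs u w ↔ bruhatLE cs (s c * u) w := by
  constructor
  · exact bruhatLE_simple_mul_left cs c hw
  · intro h
    have h2 := bruhatLE_simple_mul_left cs c hw h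
    rwa [← mul_assoc, cs.simple_mul_simple_self, one_mul] at h2

lemma bruhatLE_inv {u w : W} (h : bruhatLE cs u w) : bruhatLE cs u⁻¹ w⁻¹ := by
  induction h with
  | refl => exact Relation.ReflTransGen.refl
  | @tail b v hab e ih =>
    obtain ⟨t, ht, rfl, hlen⟩ := e
    refine Relation.ReflTransGen.tail ih ⟨b⁻¹ * t * b⁻¹⁻¹, ht.conj b⁻¹, ?_, ?_⟩
    · rw [mul_inv_rev, ht.inv]
      group
    · rw [cs.length_inv, cs.length_inv]
      exact hlen

lemma bruhatLE_mul_simple_right_iff (c : B) {w : W} (hw : ℓ (w * s c) < ℓ w) (v : W) :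
    bruhatLE cs v w ↔ bruhatLE cs (v * s c) w := by
  have hwin : ℓ (s c * w⁻¹) < ℓ w⁻¹ := by
    have he : s c * w⁻¹ = (w * s c)⁻¹ := by rw [mul_inv_rev, cs.inv_simple]
    rw [he, cs.length_inv, cs.length_inv]
    exact hw
  constructor
  · intro h
    have h2 := (bruhatLE_simple_mul_left_iff cs c hwin v⁻¹).1 (bruhatLE_inv cs h)
    have h3 := bruhatLE_inv cs h2
    rwa [mul_inv_rev, inv_inv, inv_inv, cs.inv_simple] at h3
  · intro h
    have h1 := bruhatLE_inv cs h
    rw [mul_inv_rev, cs.inv_simple] at h1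
    have h2 := (bruhatLE_simple_mul_left_iff cs c hwin v⁻¹).2 h1
    have h3 := bruhatLE_inv cs h2
    rwa [inv_inv, inv_inv] at h3

lemma edge_or_edge_iff (v y : W) :
    (bruhatEdge cs v y ∨ bruhatEdge cs y v) ↔ ∃ t, cs.IsReflection t ∧ y = t * v := by
  constructor
  · rintro (⟨t, ht, rfl, h⟩ | ⟨t, ht, rfl, h⟩)
    · exact ⟨t, ht, rfl⟩
    · exact ⟨t, ht, by rw [← mul_assoc, ht.mul_self, one_mul]⟩
  · rintro ⟨t, ht, rfl⟩
    have hne : ℓ (t * v) ≠ ℓ v := ht.length_mul_right_ne v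
    rcases Nat.lt_or_ge (ℓ v) (ℓ (t * v)) with h | h
    · exact Or.inl ⟨t, ht, rfl, h⟩
    · exact Or.inr ⟨t, ht, by rw [← mul_assoc, ht.mul_self, one_mul], by omega⟩

end BruhatAux

/-- Invariance of degree on lower Bruhat intervals under right descents. -/
theorem degLower_right_descent_invariant [Finite W]
    (cs : CoxeterSystem M W) (w : W) (i : B) (hi : cs.IsRightDescent w i) :
    ∀ v : W, degLower cs w v = degLower cs w (v * cs.simple i) := by
  intro v
  have hw : cs.length (w * cs.simple i) < cs.length w := hi
  have hiff : ∀ u : W, bruhatLE cs u w ↔ bruhatLE cs (u * cs.simple i) w :=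
    BruhatAux.bruhatLE_mul_simple_right_iff cs i hw
  have hsets : (fun y => y * cs.simple i) ''
      {y : W | bruhatLE cs y w ∧ (bruhatEdge cs v y ∨ bruhatEdge cs y v)}
      = {y : W | bruhatLE cs y w ∧
          (bruhatEdge cs (v * cs.simple i) y ∨ bruhatEdge cs y (v * cs.simple i))} := by
    ext z
    simp only [Set.mem_image, Set.mem_setOf_eq]
    constructor
    · rintro ⟨y, ⟨hyw, hsym⟩, rfl⟩
      refine ⟨(hiff y).1 hyw, ?_⟩
      rw [BruhatAux.edge_or_edge_iff] at hsym ⊢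
      obtain ⟨t, ht, rfl⟩ := hsym
      exact ⟨t, ht, by group⟩
    · rintro ⟨hzw, hsym⟩
      refine ⟨z * cs.simple i, ⟨(hiff z).1 hzw, ?_⟩, ?_⟩
      · rw [BruhatAux.edge_or_edge_iff] at hsym ⊢
        obtain ⟨t, ht, hz⟩ := hsym
        refine ⟨t, ht, ?_⟩
        rw [hz, mul_assoc, mul_assoc, cs.simple_mul_simple_self, mul_one]
      · rw [mul_assoc, cs.simple_mul_simple_self, mul_one]
  have hinj : Function.Injective (fun y : W => y * cs.simple i) :=
    fun a b h => by
      have h' : a * cs.simple i = b * cs.simple i := h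
      have := congrArg (fun x => x * cs.simple i) h'
      simpa [mul_assoc, cs.simple_mul_simple_self] using this
  unfold degLower
  by_cases hv : bruhatLE cs v w
  · rw [if_pos hv, if_pos ((hiff v).1 hv)]
    rw [← hsets, Set.ncard_image_of_injective _ hinj]
  · have hvs : ¬ bruhatLE cs (v * cs.simple i) w := by
      intro h
      have h2 := (hiff (v * cs.simple i)).1 h
      rw [mul_assoc, cs.simple_mul_simple_self, mul_one] at h2
      exact hv h2
    rw [if_neg hv, if_neg hvs]
end

section
/- Let W be a finite Coxeter group, w ∈ W with w ≠ e, and let t be a reflection lying in the parabolic subgroup W_{D_L(w)}. Then the map v ↦ tv is an involution of the lower Bruhat interval [e, w] with no fixed points; consequently Σ_{v ≤ w} (−1)^{ℓ(v)} = 0. -/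
open CoxeterSystem

variable {B W : Type*} [Group W] {M : CoxeterMatrix B}

namespace BruhatAux

open scoped Classical

set_option linter.unusedSectionVars false

variable {B W : Type*} [Group W] {M : CoxeterMatrix B}

/-- Functions from `W` to `ZMod 2`, multiplicatively. -/
abbrev Nn (W : Type*) := W → Multiplicative (ZMod 2)

/-- `W` acts on `Nn W` by conjugating the argument. -/
def conjAct (W : Type*) [Group W] : W →* MulAut (Nn W) where
  toFun u :=
    { toFun := fun f x => f (u⁻¹ * x * u)
      invFun := fun f x => f (u * x * u⁻¹)
      left_inv := fun f => by funext x; group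
      right_inv := fun f => by funext x; group
      map_mul' := fun f g => rfl }
  map_one' := by ext f x; simp
  map_mul' := fun u v => by ext f x; simp [mul_assoc]

lemma conjAct_apply (u : W) (f : Nn W) (x : W) : conjAct W u f x = f (u⁻¹ * x * u) := rfl

/-- Indicator function. -/
noncomputable def chi (c : W) : Nn W :=
  fun x => if x = c then Multiplicative.ofAdd 1 else 1

lemma chi_self (c : W) : chi c c = Multiplicative.ofAdd 1 := by simp [chi]

lemma chi_ne {c x : W} (h : x ≠ c) : chi c x = 1 := by simp [chi, h]

lemma conjAct_chi (u c : W) : conjAct W u (chi c) = chi (u * c * u⁻¹) := by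
  funext x
  simp only [conjAct_apply, chi]
  congr 1
  simp only [eq_iff_iff]
  constructor
  · intro h; rw [← h]; group
  · intro h; rw [h]; group

lemma nn_sq (f : Nn W) : f * f = 1 := by
  funext x
  show f x * f x = 1
  have : ∀ a : Multiplicative (ZMod 2), a * a = 1 := by decide
  exact this _


lemma right_pow {G : Type*} [Group G] (φ : G →* MulAut (Nn W)) (a : Nn W ⋊[φ] G) (m : ℕ) :
    (a ^ m).right = a.right ^ m :=
  map_pow SemidirectProduct.rightHom a m

/-- The power of an element of a semidirect product with commutative kernel. -/
lemma left_pow {G : Type*} [Group G] (φ : G →* MulAut (Nn W)) (a : Nn W ⋊[φ] G) (m : ℕ) :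
    (a ^ m).left = ∏ k ∈ Finset.range m, φ (a.right ^ k) a.left := by
  induction m with
  | zero => simp [SemidirectProduct.one_left]
  | succ m ih =>
      rw [pow_succ, SemidirectProduct.mul_left, ih, Finset.prod_range_succ, right_pow]

variable (cs : CoxeterSystem M W)

noncomputable def genF (i : B) : Nn W ⋊[conjAct W] W :=
  ⟨chi (cs.simple i), cs.simple i⟩

lemma liftable : CoxeterMatrix.IsLiftable M (genF cs) := by
  intro i i'
  set m := M i i' with hm
  set p := cs.simple i * cs.simple i' with hp
  have hpm : p ^ m = 1 := cs.simple_mul_simple_pow i i'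
  have h1 : cs.simple i * p * (cs.simple i)⁻¹ = p⁻¹ := by
    rw [hp, cs.inv_simple, mul_inv_rev, cs.inv_simple, cs.inv_simple]
    calc cs.simple i * (cs.simple i * cs.simple i') * cs.simple i
        = (cs.simple i * cs.simple i) * cs.simple i' * cs.simple i := by group
      _ = cs.simple i' * cs.simple i := by rw [cs.simple_mul_simple_self]; group
  have h1' : cs.simple i * p⁻¹ * (cs.simple i)⁻¹ = p := by
    rw [hp, cs.inv_simple, mul_inv_rev, cs.inv_simple, cs.inv_simple]
    calc cs.simple i * (cs.simple i' * cs.simple i) * cs.simple i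
        = cs.simple i * cs.simple i' * (cs.simple i * cs.simple i) := by group
      _ = cs.simple i * cs.simple i' := by rw [cs.simple_mul_simple_self]; group
  have h4 : ∀ k : ℕ, cs.simple i * p⁻¹ ^ k * (cs.simple i)⁻¹ = p ^ k := by
    intro k
    rw [← conj_pow, h1']
  have e1 : ∀ k : ℕ, p ^ k * cs.simple i * (p ^ k)⁻¹ = p ^ (2 * k) * cs.simple i := by
    intro k
    calc p ^ k * cs.simple i * (p ^ k)⁻¹
        = p ^ k * (cs.simple i * (p ^ k)⁻¹ * (cs.simple i)⁻¹) * cs.simple i := by group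
      _ = p ^ k * (cs.simple i * p⁻¹ ^ k * (cs.simple i)⁻¹) * cs.simple i := by
          rw [← inv_pow]
      _ = p ^ k * p ^ k * cs.simple i := by rw [h4 k]
      _ = p ^ (2 * k) * cs.simple i := by rw [two_mul, pow_add]
  have e2 : ∀ k : ℕ, p ^ k * (p * cs.simple i) * (p ^ k)⁻¹
      = p ^ (2 * k + 1) * cs.simple i := by
    intro k
    have hcomm : p ^ k * (p * cs.simple i) = p * (p ^ k * cs.simple i) := by
      rw [← mul_assoc, ← pow_succ, pow_succ', mul_assoc]
    calc p ^ k * (p * cs.simple i) * (p ^ k)⁻¹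
        = p * (p ^ k * cs.simple i) * (p ^ k)⁻¹ := by rw [hcomm]
      _ = p * (p ^ k * cs.simple i * (p ^ k)⁻¹) := by group
      _ = p * (p ^ (2 * k) * cs.simple i) := by rw [e1 k]
      _ = p ^ (2 * k + 1) * cs.simple i := by
          rw [pow_succ' p (2 * k)]
          exact (mul_assoc p _ _).symm
  refine SemidirectProduct.ext ?_ ?_
  · -- left component
    rw [left_pow]
    have hright : (genF cs i * genF cs i').right = p := rfl
    have hleft : (genF cs i * genF cs i').left
        = chi (cs.simple i) * chi (p * cs.simple i) := by
      show chi (cs.simple i) * conjAct W (cs.simple i) (chi (cs.simple i')) = _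
      rw [conjAct_chi, cs.inv_simple]
    rw [hright, hleft]
    have key : ∀ k : ℕ, conjAct W (p ^ k) (chi (cs.simple i) * chi (p * cs.simple i))
        = chi (p ^ (2 * k) * cs.simple i) * chi (p ^ (2 * k + 1) * cs.simple i) := by
      intro k
      rw [map_mul, conjAct_chi, conjAct_chi, e1 k, e2 k]
    calc (∏ k ∈ Finset.range m, conjAct W (p ^ k)
            (chi (cs.simple i) * chi (p * cs.simple i)))
        = ∏ k ∈ Finset.range m,
            (chi (p ^ (2 * k) * cs.simple i) * chi (p ^ (2 * k + 1) * cs.simple i)) :=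
          Finset.prod_congr rfl fun k _ => key k
      _ = ∏ a ∈ Finset.range (2 * m), chi (p ^ a * cs.simple i) := by
          induction m with
          | zero => simp
          | succ n ih =>
              rw [Finset.prod_range_succ, ih, show 2 * (n + 1) = 2 * n + 1 + 1 by ring,
                Finset.prod_range_succ, Finset.prod_range_succ, mul_assoc]
      _ = (∏ a ∈ Finset.range m, chi (p ^ a * cs.simple i))
            * ∏ a ∈ Finset.range m, chi (p ^ (m + a) * cs.simple i) := by
          rw [two_mul, Finset.prod_range_add]
      _ = (∏ a ∈ Finset.range m, chi (p ^ a * cs.simple i))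
            * ∏ a ∈ Finset.range m, chi (p ^ a * cs.simple i) := by
          congr 1
          refine Finset.prod_congr rfl fun a _ => ?_
          rw [pow_add, hpm, one_mul]
      _ = 1 := nn_sq _
  · rw [right_pow]
    show p ^ m = 1
    exact hpm

/-- The reflection-counting homomorphism. -/
noncomputable def nmap : W →* Nn W ⋊[conjAct W] W :=
  cs.lift ⟨genF cs, liftable cs⟩

lemma nmap_simple (i : B) : nmap cs (cs.simple i) = genF cs i :=
  cs.lift_apply_simple (liftable cs) i

lemma nmap_right (w : W) : (nmap cs w).right = w := by
  have : (SemidirectProduct.rightHom.comp (nmap cs) : W →* W) = MonoidHom.id W := by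
    apply cs.ext_simple
    intro i
    simp [nmap_simple, genF, SemidirectProduct.rightHom]
  calc (nmap cs w).right = (SemidirectProduct.rightHom.comp (nmap cs)) w := rfl
    _ = w := by rw [this]; rfl

lemma nmap_left_mul (u v : W) :
    (nmap cs (u * v)).left = (nmap cs u).left * conjAct W u ((nmap cs v).left) := by
  rw [map_mul, SemidirectProduct.mul_left, nmap_right]

lemma nmap_left_mul_apply (u v x : W) :
    (nmap cs (u * v)).left x = (nmap cs u).left x * (nmap cs v).left (u⁻¹ * x * u) := by
  rw [nmap_left_mul]; rfl

/-- `nmap` of a word product counts the left inversion sequence. -/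
lemma nmap_left_wordProd (ω : List B) :
    (nmap cs (cs.wordProd ω)).left = ((cs.leftInvSeq ω).map chi).prod := by
  induction ω with
  | nil => simp [SemidirectProduct.one_left]
  | cons i ω ih =>
      rw [cs.wordProd_cons, nmap_left_mul, ih]
      have hlis : cs.leftInvSeq (i :: ω)
          = cs.simple i :: (cs.leftInvSeq ω).map (MulAut.conj (cs.simple i)) := rfl
      rw [hlis]
      rw [List.map_cons, List.prod_cons]
      have h0 : (nmap cs (cs.simple i)).left = chi (cs.simple i) := by
        rw [nmap_simple]; rfl
      rw [h0]
      congr 1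
      rw [map_list_prod, List.map_map, List.map_map]
      have hfun : (⇑(conjAct W (cs.simple i)) ∘ chi)
          = (chi ∘ ⇑(MulAut.conj (cs.simple i)) : W → Nn W) := by
        funext t
        show conjAct W (cs.simple i) (chi t) = chi (MulAut.conj (cs.simple i) t)
        rw [conjAct_chi]
        rfl
      rw [hfun]

lemma prod_map_chi_apply_of_not_mem {l : List W} {x : W} (hx : x ∉ l) :
    (l.map chi).prod x = 1 := by
  induction l with
  | nil => rfl
  | cons c l ih =>
      rw [List.map_cons, List.prod_cons]
      have hxc : x ≠ c := fun h => hx (h ▸ (List.mem_cons_self : c ∈ c :: l))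
      have hxl : x ∉ l := fun h => hx (List.mem_cons_of_mem c h)
      show chi c x * (l.map chi).prod x = 1
      rw [chi_ne hxc, ih hxl, one_mul]

/-- If the cocycle is nontrivial at `t`, then `t` appears in every left inversion sequence. -/
lemma mem_leftInvSeq_of_nmap_ne_one {w t : W} {ω : List B} (hω : cs.wordProd ω = w)
    (h : (nmap cs w).left t ≠ 1) : t ∈ cs.leftInvSeq ω := by
  by_contra hmem
  apply h
  rw [← hω, nmap_left_wordProd]
  exact prod_map_chi_apply_of_not_mem hmem

lemma nmap_refl_self {t : W} (ht : cs.IsReflection t) :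
    (nmap cs t).left t = Multiplicative.ofAdd 1 := by
  obtain ⟨u, i, rfl⟩ := ht
  have hY : u⁻¹ * (u * (cs.simple i * u⁻¹)) * u = cs.simple i := by group
  have key : (nmap cs u).left (u * (cs.simple i * u⁻¹))
      * (nmap cs u⁻¹).left (cs.simple i) = 1 := by
    have h1 : (nmap cs (u * u⁻¹)).left (u * (cs.simple i * u⁻¹)) = 1 := by
      rw [mul_inv_cancel, map_one, SemidirectProduct.one_left]; rfl
    rw [nmap_left_mul_apply, hY] at h1
    exact h1
  have hre : u * cs.simple i * u⁻¹ = u * (cs.simple i * u⁻¹) := by group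
  rw [hre, nmap_left_mul_apply, nmap_left_mul_apply, hY]
  have hZ : (cs.simple i)⁻¹ * cs.simple i * cs.simple i = cs.simple i := by group
  rw [hZ]
  have h2 : (nmap cs (cs.simple i)).left (cs.simple i) = Multiplicative.ofAdd 1 := by
    rw [nmap_simple]
    exact chi_self _
  rw [h2]
  rw [mul_left_comm]
  rw [key, mul_one]

/-- The key cocycle fact: a left inversion has nontrivial cocycle value. -/
lemma nmap_ne_one_of_inversion {w t : W} (ht : cs.IsReflection t)
    (hlt : cs.length (t * w) < cs.length w) :
    (nmap cs w).left t ≠ 1 := by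
  intro hcon
  have hw : w = t * (t * w) := by rw [← mul_assoc, ht.mul_self, one_mul]
  have hexp : (nmap cs w).left t
      = (nmap cs t).left t * (nmap cs (t * w)).left (t⁻¹ * t * t) := by
    conv_lhs => rw [hw]
    rw [nmap_left_mul_apply]
  rw [ht.inv] at hexp
  have h3 : t * t * t = t := by rw [ht.mul_self, one_mul]
  rw [h3, nmap_refl_self cs ht, hcon] at hexp
  have h4 : (nmap cs (t * w)).left t ≠ 1 := by
    intro h5
    rw [h5, mul_one] at hexp
    exact (by decide : (1 : Multiplicative (ZMod 2)) ≠ Multiplicative.ofAdd 1) hexp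
  obtain ⟨ω, hred, hω⟩ := cs.exists_reduced_word' (t * w)
  have hmem := mem_leftInvSeq_of_nmap_ne_one cs hω.symm h4
  have hinv := cs.isLeftInversion_of_mem_leftInvSeq hred hmem
  rw [← hω] at hinv
  have h6 : cs.length (t * (t * w)) < cs.length (t * w) := hinv.2
  rw [← mul_assoc, ht.mul_self, one_mul] at h6
  omega

/-- **Strong exchange property**. -/
lemma strong_exchange {w t : W} (ht : cs.IsReflection t)
    (hlt : cs.length (t * w) < cs.length w) {ω : List B} (hω : cs.wordProd ω = w) :
    ∃ j, j < ω.length ∧ t * w = cs.wordProd (ω.eraseIdx j) := by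
  have hne := nmap_ne_one_of_inversion cs ht hlt
  have hmem := mem_leftInvSeq_of_nmap_ne_one cs hω hne
  obtain ⟨j, hj, hget⟩ := List.mem_iff_getElem.mp hmem
  rw [cs.length_leftInvSeq] at hj
  refine ⟨j, hj, ?_⟩
  have h7 := cs.getD_leftInvSeq_mul_wordProd ω j
  rw [List.getD_eq_getElem _ _ (by rw [cs.length_leftInvSeq]; exact hj)] at h7
  rw [hget, hω] at h7
  exact h7

lemma edge_left_mul {t u : W} (ht : cs.IsReflection t)
    (h : cs.length u < cs.length (t * u)) : bruhatLE cs u (t * u) :=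
  Relation.ReflTransGen.single ⟨t, ht, rfl, h⟩

lemma le_of_descent_mul {t w : W} (ht : cs.IsReflection t)
    (h : cs.length (t * w) < cs.length w) : bruhatLE cs (t * w) w := by
  refine Relation.ReflTransGen.single ⟨t, ht, ?_, h⟩
  rw [← mul_assoc, ht.mul_self, one_mul]

/-- Every word has a reduced sublist with the same product. -/
lemma exists_reduced_sublist : ∀ (n : ℕ) (ω : List B), ω.length ≤ n →
    ∃ τ, τ.Sublist ω ∧ cs.IsReduced τ ∧ cs.wordProd τ = cs.wordProd ω := by
  intro n
  induction n with
  | zero =>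
      intro ω h
      have hω : ω = [] := List.eq_nil_of_length_eq_zero (Nat.le_zero.mp h)
      subst hω
      exact ⟨[], List.Sublist.refl _, by simp [CoxeterSystem.IsReduced], rfl⟩
  | succ n ih =>
      intro ω hlen
      match ω with
      | [] => exact ⟨[], List.Sublist.refl _, by simp [CoxeterSystem.IsReduced], rfl⟩
      | j :: ω₁ =>
        obtain ⟨τ₁, hsub, hred, hprod⟩ := ih ω₁ (by
          simp only [List.length_cons] at hlen; omega)
        rcases cs.length_simple_mul (cs.wordProd τ₁) j with hup | hdown
        · refine ⟨j :: τ₁, hsub.cons₂ j, ?_, ?_⟩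
          · show cs.length (cs.wordProd (j :: τ₁)) = (j :: τ₁).length
            rw [cs.wordProd_cons, hup, hred, List.length_cons]
          · rw [cs.wordProd_cons, cs.wordProd_cons, hprod]
        · have hlt : cs.length (cs.simple j * cs.wordProd τ₁) < cs.length (cs.wordProd τ₁) := by
            omega
          obtain ⟨k, hk, heq⟩ := strong_exchange cs (cs.isReflection_simple j) hlt rfl
          obtain ⟨τ₂, hsub2, hred2, hprod2⟩ := ih (τ₁.eraseIdx k) (by
            have h1 := (τ₁.eraseIdx_sublist k).length_le
            have h2 := hsub.length_le
            simp only [List.length_cons] at hlen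
            omega)
          refine ⟨τ₂, ?_, hred2, ?_⟩
          · exact hsub2.trans ((τ₁.eraseIdx_sublist k).trans
              (hsub.trans (List.sublist_cons_self j ω₁)))
          · rw [hprod2, ← heq, cs.wordProd_cons, hprod]

/-- The mutual induction: monotonicity of multiplication (R), the lifting property (S),
and the subword property (A). -/
lemma triple (n : ℕ) :
    (∀ u : W, cs.length u + 1 ≤ n → ∀ i : B,
      cs.length u < cs.length (cs.simple i * u) →
      ∀ v, bruhatLE cs v u → bruhatLE cs (cs.simple i * v) (cs.simple i * u))
  ∧ (∀ w : W, cs.length w ≤ n → ∀ i : B,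
      cs.length (cs.simple i * w) < cs.length w →
      ∀ v, bruhatLE cs v w → bruhatLE cs (cs.simple i * v) w)
  ∧ (∀ ω : List B, ω.length ≤ n → cs.IsReduced ω → ∀ τ : List B, τ.Sublist ω →
      bruhatLE cs (cs.wordProd τ) (cs.wordProd ω)) := by
  induction n with
  | zero =>
      refine ⟨fun u hu => by omega, fun w hw i hi v hv => by omega, ?_⟩
      intro ω hω hred τ hτ
      have h1 : ω = [] := List.eq_nil_of_length_eq_zero (Nat.le_zero.mp hω)
      subst h1
      have h2 : τ = [] := List.sublist_nil.mp hτ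
      subst h2
      exact Relation.ReflTransGen.refl
  | succ n ih =>
      obtain ⟨ihR, ihS, ihA⟩ := ih
      have R : ∀ u : W, cs.length u + 1 ≤ n + 1 → ∀ i : B,
          cs.length u < cs.length (cs.simple i * u) →
          ∀ v, bruhatLE cs v u → bruhatLE cs (cs.simple i * v) (cs.simple i * u) := by
        intro u hu i hiu v hv
        rcases Relation.ReflTransGen.cases_tail hv with heq | ⟨u', hvu', hedge⟩
        · subst heq; exact Relation.ReflTransGen.refl
        · obtain ⟨t, htr, hte, htl⟩ := hedge
          subst hte
          by_cases hcase : cs.length u' < cs.length (cs.simple i * u')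
          · have h1 : bruhatLE cs (cs.simple i * v) (cs.simple i * u') :=
              ihR u' (by omega) i hcase v hvu'
            have e1 : cs.length (cs.simple i * u') = cs.length u' + 1 := by
              rcases cs.length_simple_mul u' i with h | h <;> omega
            have e2 : cs.length (cs.simple i * (t * u')) = cs.length (t * u') + 1 := by
              rcases cs.length_simple_mul (t * u') i with h | h <;> omega
            have hedge2 : bruhatLE cs (cs.simple i * u') (cs.simple i * (t * u')) := by
              refine Relation.ReflTransGen.single
                ⟨cs.simple i * t * (cs.simple i)⁻¹, htr.conj _, by group, by omega⟩
            exact h1.trans hedge2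
          · have hlt' : cs.length (cs.simple i * u') < cs.length u' := by
              rcases cs.length_simple_mul u' i with h | h <;> omega
            have h1 : bruhatLE cs (cs.simple i * v) u' :=
              ihS u' (by omega) i hlt' v hvu'
            have h2 : bruhatLE cs u' (t * u') := edge_left_mul cs htr htl
            have h3 : bruhatLE cs (t * u') (cs.simple i * (t * u')) :=
              edge_left_mul cs (cs.isReflection_simple i) hiu
            exact h1.trans (h2.trans h3)
      have S : ∀ w : W, cs.length w ≤ n + 1 → ∀ i : B,
          cs.length (cs.simple i * w) < cs.length w →
          ∀ v, bruhatLE cs v w → bruhatLE cs (cs.simple i * v) w := by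
        intro w hw i hiw v hv
        rcases Relation.ReflTransGen.cases_tail hv with heq | ⟨u, hvu, hedge⟩
        · subst heq; exact le_of_descent_mul cs (cs.isReflection_simple i) hiw
        · obtain ⟨t, htr, hte, htl⟩ := hedge
          subst hte
          by_cases hcase : cs.length (cs.simple i * u) < cs.length u
          · exact (ihS u (by omega) i hcase v hvu).trans (edge_left_mul cs htr htl)
          · have hgt : cs.length u < cs.length (cs.simple i * u) := by
              rcases cs.length_simple_mul u i with h | h <;> omega
            have h1 : bruhatLE cs (cs.simple i * v) (cs.simple i * u) :=
              R u (by omega) i hgt v hvu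
            -- build a reduced word for `t * u` starting with `i`
            have hlen : cs.length (cs.simple i * (t * u)) + 1 = cs.length (t * u) := by
              rcases cs.length_simple_mul (t * u) i with h | h <;> omega
            obtain ⟨ω₀, hred₀, hω₀⟩ := cs.exists_reduced_word' (cs.simple i * (t * u))
            have hω₀len : ω₀.length = cs.length (cs.simple i * (t * u)) := by
              rw [hω₀]; exact hred₀.symm
            have hωprod : cs.wordProd (i :: ω₀) = t * u := by
              rw [cs.wordProd_cons, ← hω₀, ← mul_assoc, cs.simple_mul_simple_self, one_mul]
            have hltu : cs.length (t * (t * u)) < cs.length (t * u) := by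
              rw [← mul_assoc, htr.mul_self, one_mul]; exact htl
            obtain ⟨j, hj, heq⟩ := strong_exchange cs htr hltu hωprod
            have hequ : u = cs.wordProd ((i :: ω₀).eraseIdx j) := by
              rw [← heq, ← mul_assoc, htr.mul_self, one_mul]
            match j with
            | 0 =>
                have h0 : u = cs.wordProd ω₀ := hequ
                have h2 : cs.simple i * u = t * u := by
                  conv_lhs => rw [h0, ← hω₀]
                  rw [← mul_assoc, cs.simple_mul_simple_self, one_mul]
                rw [← h2]
                exact h1
            | Nat.succ j' =>
                have herase : (i :: ω₀).eraseIdx (j' + 1) = i :: ω₀.eraseIdx j' := rfl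
                have h0 : cs.simple i * u = cs.wordProd (ω₀.eraseIdx j') := by
                  rw [hequ, herase, cs.wordProd_cons, ← mul_assoc,
                    cs.simple_mul_simple_self, one_mul]
                have h2 : bruhatLE cs (cs.simple i * u) (cs.wordProd ω₀) := by
                  rw [h0]
                  exact ihA ω₀ (by omega) hred₀ _ (ω₀.eraseIdx_sublist j')
                have h3 : bruhatLE cs (cs.wordProd ω₀) (t * u) := by
                  rw [← hω₀]
                  exact le_of_descent_mul cs (cs.isReflection_simple i) hiw
                exact h1.trans (h2.trans h3)
      have A : ∀ ω : List B, ω.length ≤ n + 1 → cs.IsReduced ω → ∀ τ : List B, τ.Sublist ω →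
          bruhatLE cs (cs.wordProd τ) (cs.wordProd ω) := by
        intro ω hω hred τ hτ
        obtain ⟨τ', hτ'sub, hτ'red, hτ'prod⟩ := exists_reduced_sublist cs τ.length τ le_rfl
        rw [← hτ'prod]
        have hsub : τ'.Sublist ω := hτ'sub.trans hτ
        clear hτ'sub hτ'prod hτ
        match ω, hsub with
        | [], hsub =>
            have h2 : τ' = [] := List.sublist_nil.mp hsub
            subst h2
            exact Relation.ReflTransGen.refl
        | i :: ω₀, hsub =>
            have hω₀red : cs.IsReduced ω₀ := by
              have := hred.drop 1
              simpa using this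
            have hω₀len : cs.length (cs.wordProd ω₀) = ω₀.length := hω₀red
            have hωlen : cs.length (cs.wordProd (i :: ω₀)) = ω₀.length + 1 := by
              rw [hred]; rfl
            cases hsub with
            | cons _ h =>
                have h1 : bruhatLE cs (cs.wordProd τ') (cs.wordProd ω₀) :=
                  ihA ω₀ (by simp only [List.length_cons] at hω; omega) hω₀red τ' h
                have h2 : bruhatLE cs (cs.wordProd ω₀) (cs.wordProd (i :: ω₀)) := by
                  rw [cs.wordProd_cons]
                  refine edge_left_mul cs (cs.isReflection_simple i) ?_
                  rw [← cs.wordProd_cons]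
                  omega
                exact h1.trans h2
            | @cons_cons τ₀ _ _ h =>
                have hτ₀red : cs.IsReduced τ₀ := by
                  have := hτ'red.drop 1
                  simpa using this
                have hτ₀len : cs.length (cs.wordProd τ₀) = τ₀.length := hτ₀red
                have hτ'len : cs.length (cs.wordProd (i :: τ₀)) = τ₀.length + 1 := by
                  rw [hτ'red]; rfl
                have h1 : bruhatLE cs (cs.wordProd τ₀) (cs.wordProd ω₀) :=
                  ihA ω₀ (by simp only [List.length_cons] at hω; omega) hω₀red τ₀ h
                have h2 : cs.length (cs.wordProd ω₀) < cs.length (cs.simple i * cs.wordProd ω₀) := by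
                  rw [← cs.wordProd_cons]
                  omega
                have h3 := R (cs.wordProd ω₀) (by simp only [List.length_cons] at hω; omega)
                  i h2 (cs.wordProd τ₀) h1
                rw [cs.wordProd_cons, cs.wordProd_cons]
                exact h3
      exact ⟨R, S, A⟩

/-- The lifting property. -/
lemma lift_descent {w : W} {i : B} (hi : cs.IsLeftDescent w i) :
    ∀ v, bruhatLE cs v w → bruhatLE cs (cs.simple i * v) w :=
  (triple cs (cs.length w)).2.1 w le_rfl i hi

/-- The lower interval `[e, w]` is stable under left multiplication by `W_{D_L(w)}`. -/
lemma parabolic_stable (w : W) {u : W}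
    (hu : u ∈ Subgroup.closure (cs.simple '' {i : B | cs.IsLeftDescent w i})) :
    ∀ v, bruhatLE cs v w → bruhatLE cs (u * v) w := by
  have main : ∀ (x : W), x ∈ Subgroup.closure (cs.simple '' {i : B | cs.IsLeftDescent w i}) →
      (∀ v, bruhatLE cs v w → bruhatLE cs (x * v) w) ∧
      (∀ v, bruhatLE cs v w → bruhatLE cs (x⁻¹ * v) w) := by
    intro x hx
    induction hx using Subgroup.closure_induction with
    | mem y hy =>
        obtain ⟨i, hi, rfl⟩ := hy
        constructor
        · exact lift_descent cs hi
        · rw [cs.inv_simple]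
          exact lift_descent cs hi
    | one =>
        constructor <;> intro v hv <;> simpa using hv
    | mul y z hy hz ihy ihz =>
        constructor
        · intro v hv
          rw [mul_assoc]
          exact ihy.1 _ (ihz.1 v hv)
        · intro v hv
          rw [mul_inv_rev, mul_assoc]
          exact ihz.2 _ (ihy.2 v hv)
    | inv y hy ihy =>
        refine ⟨ihy.2, ?_⟩
        rw [inv_inv]
        exact ihy.1
  exact (main u hu).1

end BruhatAux

open scoped Classical in
/-- Multiplication by a reflection of `W_{D_L(w)}` is a fixed-point-free involution of `[e, w]`;
hence the lower interval is sign-balanced. -/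
theorem lower_interval_sign_balanced [Fintype W]
    (cs : CoxeterSystem M W) (w : W) (hw : w ≠ 1) (t : W)
    (ht : cs.IsReflection t)
    (htP : t ∈ parabolic cs {i : B | cs.IsLeftDescent w i}) :
    (∀ v : W, bruhatLE cs v w → bruhatLE cs (t * v) w ∧ t * v ≠ v ∧ t * (t * v) = v) ∧
    ∑ v ∈ Finset.univ.filter (fun v => bruhatLE cs v w), (-1 : ℤ) ^ cs.length v = 0 := by
  have htne : t ≠ 1 := by
    intro h
    have hodd := ht.odd_length
    rw [h, cs.length_one] at hodd
    exact (Nat.not_odd_iff_even.mpr Even.zero) hodd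
  have hstab : ∀ v, bruhatLE cs v w → bruhatLE cs (t * v) w :=
    BruhatAux.parabolic_stable cs w htP
  have hfix : ∀ v : W, t * v ≠ v := by
    intro v h
    exact htne (mul_right_cancel (h.trans (one_mul v).symm))
  have hinvol : ∀ v : W, t * (t * v) = v := by
    intro v
    rw [← mul_assoc, ht.mul_self, one_mul]
  refine ⟨fun v hv => ⟨hstab v hv, hfix v, hinvol v⟩, ?_⟩
  have hsign : ∀ v : W, (-1 : ℤ) ^ cs.length (t * v) = -(-1 : ℤ) ^ cs.length v := by
    intro v
    have hmod := cs.length_mul_mod_two t v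
    have hodd : cs.length t % 2 = 1 := Nat.odd_iff.mp ht.odd_length
    rcases Nat.even_or_odd (cs.length v) with he | ho
    · have h1 : Odd (cs.length (t * v)) := by
        rw [Nat.odd_iff, hmod]
        rw [Nat.even_iff] at he
        omega
      rw [he.neg_one_pow, h1.neg_one_pow]
    · have h1 : Even (cs.length (t * v)) := by
        rw [Nat.even_iff, hmod]
        rw [Nat.odd_iff] at ho
        omega
      rw [ho.neg_one_pow, h1.neg_one_pow, neg_neg]
  refine Finset.sum_involution (fun v _ => t * v) ?_ ?_ ?_ ?_
  · intro v _
    rw [hsign v]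
    ring
  · intro v _ _
    exact hfix v
  · intro v hv
    rw [Finset.mem_filter] at hv ⊢
    exact ⟨Finset.mem_univ _, hstab v hv.2⟩
  · intro v _
    exact hinvol v
end
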